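/- Define on R = Q[Q_1, Q_2, Q_3, ...] (with Q_0 := 1) the operators 𝒟_n = Σ_{i⃗ ∈ Z_{≥0}^n} multinomial(|i⃗|; i_1,...,i_n) Q_{|i⃗|} ∂^n/(∂Q_{i_1+1}···∂Q_{i_n+1}) for n ≥ 1, and 𝒟_0 = 1. Then the operators 𝒟_n and 𝒟_m commute for all n, m ≥ 0: [𝒟_n, 𝒟_m] = 0. -/

import Mathlib

open MvPolynomial

/-- The Bloch–Okounkov ring `R = ℚ[Q₁, Q₂, Q₃, …]`, with `Q k = X k` for `k : ℕ+`. -/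
noncomputable abbrev BO : Type := MvPolynomial ℕ+ ℚ

/-- The index `k + 1` as an element of `ℕ+`. -/
def v (k : ℕ) : ℕ+ := ⟨k + 1, Nat.succ_pos k⟩

/-- `Q_k` for `k : ℕ`, with the convention `Q₀ = 1`. -/
noncomputable def Qv (k : ℕ) : BO := if h : 0 < k then X ⟨k, h⟩ else 1

/-- The operator `𝒟_n = Σ_{i⃗ ∈ ℤ_{≥0}ⁿ} multinomial(|i⃗|; i₁,…,iₙ) Q_{|i⃗|}
∂ⁿ/(∂Q_{i₁+1} ⋯ ∂Q_{iₙ+1})`, with `Q₀ := 1`.  In particular `𝒟₀ = 1` and `𝒟₁ = ∂`. -/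
noncomputable def Dn (n : ℕ) (f : BO) : BO :=
  ∑ᶠ iv : Fin n → ℕ,
    (Nat.multinomial Finset.univ iv : ℚ) •
      (Qv (∑ j, iv j) * (List.ofFn fun j => v (iv j)).foldr (fun k p => pderiv k p) f)

/-- The operator `Δ_n = Σ_{i=0}^n (-1)^i C(n,i) 𝒟_{n-i} ∂^i`, with `∂ = 𝒟₁`. -/
noncomputable def DelN (n : ℕ) (f : BO) : BO :=
  ∑ i ∈ Finset.range (n + 1),
    ((-1 : ℚ) ^ i * (Nat.choose n i : ℚ)) • Dn (n - i) ((Dn 1)^[i] f)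

/-- iterated partial derivative along a list -/
noncomputable def P (l : List ℕ+) (f : BO) : BO := l.foldr (fun k p => pderiv k p) f

@[simp] lemma P_nil (f : BO) : P [] f = f := rfl
@[simp] lemma P_cons (k : ℕ+) (l : List ℕ+) (f : BO) : P (k :: l) f = pderiv k (P l f) := rfl

lemma P_append (l₁ l₂ : List ℕ+) (f : BO) : P (l₁ ++ l₂) f = P l₁ (P l₂ f) := by
  simp [P, List.foldr_append]

@[simp] lemma P_zero (l : List ℕ+) : P l 0 = 0 := by
  induction l with
  | nil => rfl
  | cons k l ih => simp [ih]

lemma P_add (l : List ℕ+) (f g : BO) : P l (f + g) = P l f + P l g := by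
  induction l with
  | nil => rfl
  | cons k l ih => simp [ih]

lemma P_smul (l : List ℕ+) (c : ℚ) (f : BO) : P l (c • f) = c • P l f := by
  induction l with
  | nil => rfl
  | cons k l ih => simp [ih]

lemma P_sum {α : Type*} (l : List ℕ+) (s : Finset α) (g : α → BO) :
    P l (∑ a ∈ s, g a) = ∑ a ∈ s, P l (g a) := by
  classical
  induction s using Finset.induction with
  | empty => simp
  | insert _ _ h ih => rw [Finset.sum_insert h, Finset.sum_insert h, P_add, ih]

lemma pderiv_comm (i j : ℕ+) (f : BO) :
    pderiv i (pderiv j f) = pderiv j (pderiv i f) := by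
  induction f using MvPolynomial.induction_on with
  | C a => simp
  | add p q hp hq => simp [hp, hq]
  | mul_X p k hp =>
    simp only [pderiv_mul, pderiv_X, map_add, hp, Pi.single_apply]
    split_ifs <;> simp_all

lemma P_perm {l l' : List ℕ+} (h : l.Perm l') (f : BO) : P l f = P l' f := by
  induction h generalizing f with
  | nil => rfl
  | cons x _ ih => simp [ih]
  | swap x y l => simp [pderiv_comm]
  | trans _ _ ih₁ ih₂ => rw [ih₁, ih₂]

lemma P_eq_zero_of_mem {k : ℕ+} {l : List ℕ+} (hk : k ∈ l) {f : BO}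
    (hf : k ∉ f.vars) : P l f = 0 := by
  have h1 : l.Perm (l.erase k ++ [k]) :=
    (List.perm_cons_erase hk).trans (List.perm_append_singleton k (l.erase k)).symm
  rw [P_perm h1, P_append]
  simp [P, pderiv_eq_zero_of_notMem_vars hf]
  exact P_zero _

lemma vars_pderiv (k : ℕ+) (f : BO) : (pderiv k f).vars ⊆ f.vars := by
  classical
  nth_rewrite 1 [f.as_sum]
  rw [map_sum]
  refine (vars_sum_subset _ _).trans ?_
  intro x hx
  simp only [Finset.mem_biUnion] at hx
  obtain ⟨s, hs, hxs⟩ := hx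
  rw [pderiv_monomial] at hxs
  have h2 : ((monomial (s - Finsupp.single k 1)) (coeff s f * s k)).vars ⊆ (s - Finsupp.single k 1).support := by
    by_cases hc : (coeff s f * s k : ℚ) = 0
    · simp [hc]
    · rw [vars_monomial hc]
  have := h2 hxs
  rw [Finsupp.mem_support_iff] at this
  have hx2 : x ∈ s.support := by
    rw [Finsupp.mem_support_iff]
    intro h0
    apply this
    simp [Finsupp.tsub_apply, h0]
  exact (mem_vars x).2 ⟨s, hs, hx2⟩

lemma vars_P (l : List ℕ+) (f : BO) : (P l f).vars ⊆ f.vars := by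
  induction l with
  | nil => simp
  | cons k l ih => exact (vars_pderiv k _).trans ih

lemma P_X_mul (x : ℕ+) (l : List ℕ+) (g : BO) :
    P l (X x * g) = X x * P l g + (l.count x) • P (l.erase x) g := by
  induction l with
  | nil => simp
  | cons k l ih =>
    rw [P_cons, ih, map_add, pderiv_mul, map_nsmul, pderiv_X]
    by_cases hk : k = x
    · subst hk
      rw [List.count_cons_self, List.erase_cons_head]
      by_cases hm : k ∈ l
      · have he : pderiv k (P (l.erase k) g) = P l g := by
          rw [← P_cons]; exact P_perm (List.perm_cons_erase hm).symm g
        rw [he]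
        simp only [Pi.single_eq_same, one_mul, succ_nsmul, P_cons]
        ring
      · rw [List.count_eq_zero_of_not_mem hm]
        simp [add_comm]
    · rw [show List.count x (k :: l) = List.count x l from List.count_cons_of_ne hk, List.erase_cons_tail]
      · simp only [Pi.single_apply, if_neg (Ne.symm hk), zero_mul, zero_add, P_cons]
      · simp [hk]

lemma P_Qv_mul (t : ℕ) (l : List ℕ+) (g : BO) :
    P l (Qv t * g) = Qv t * P l g +
      (if h : 0 < t then (l.count ⟨t, h⟩) • P (l.erase ⟨t, h⟩) g else 0) := by
  by_cases h : 0 < t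
  · rw [dif_pos h, Qv, dif_pos h]; exact P_X_mul _ _ _
  · rw [dif_neg h, Qv, dif_neg h, one_mul, one_mul, add_zero]

lemma count_ofFn {p : ℕ} (h : Fin p → ℕ+) (x : ℕ+) :
    (List.ofFn h).count x = ∑ a : Fin p, if h a = x then 1 else 0 := by
  induction p with
  | zero => simp
  | succ p ih =>
    rw [List.ofFn_succ, Fin.sum_univ_succ, List.count_cons, ih]
    simp only [beq_iff_eq]
    omega

def mq {p : ℕ} (iv : Fin p → ℕ) : ℚ :=
  ((∑ j, iv j).factorial : ℚ) / ∏ j, ((iv j).factorial : ℚ)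

lemma prodfac_ne_zero {p : ℕ} (iv : Fin p → ℕ) : (∏ j, ((iv j).factorial : ℚ)) ≠ 0 := by
  apply Finset.prod_ne_zero_iff.2
  intro j _
  exact_mod_cast (Nat.factorial_pos (iv j)).ne'

lemma mult_eq_mq {p : ℕ} (iv : Fin p → ℕ) :
    ((Nat.multinomial Finset.univ iv : ℕ) : ℚ) = mq iv := by
  rw [mq, eq_div_iff (prodfac_ne_zero iv)]
  rw [mul_comm]
  exact_mod_cast congrArg (Nat.cast : ℕ → ℚ) (Nat.multinomial_spec Finset.univ iv)

def box (N p : ℕ) : Finset (Fin p → ℕ) := Fintype.piFinset fun _ => Finset.range N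

lemma mem_box {N p : ℕ} {g : Fin p → ℕ} : g ∈ box N p ↔ ∀ j, g j < N := by
  simp [box, Fintype.mem_piFinset]

variable {M : Type*} [AddCommMonoid M]

lemma sum_box_perm {p N : ℕ} (σ : Equiv.Perm (Fin p)) (F : (Fin p → ℕ) → M) :
    ∑ g ∈ box N p, F g = ∑ g ∈ box N p, F (g ∘ σ) := by
  apply Finset.sum_nbij' (i := fun g => g ∘ σ.symm) (j := fun g => g ∘ σ)
  · intro a ha
    rw [mem_box] at *
    intro j; exact ha _
  · intro a ha
    rw [mem_box] at *
    intro j; exact ha _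
  · intro a _; funext j; simp
  · intro a _; funext j; simp
  · intro a _
    congr 1
    funext j; simp

lemma sum_box_cons {p N : ℕ} (F : (Fin (p+1) → ℕ) → M) :
    ∑ g ∈ box N (p+1), F g = ∑ u ∈ Finset.range N, ∑ g ∈ box N p, F (Fin.cons u g) := by
  rw [← Finset.sum_product']
  apply Finset.sum_nbij' (i := fun g => (g 0, Fin.tail g)) (j := fun q => Fin.cons q.1 q.2)
  · intro a ha
    rw [mem_box] at ha
    refine Finset.mem_product.2 ⟨Finset.mem_range.2 (ha 0), ?_⟩
    rw [mem_box]; intro j; exact ha _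
  · intro a ha
    rw [Finset.mem_product] at ha
    rw [mem_box]
    intro j
    refine Fin.cases ?_ ?_ j
    · simpa using ha.1
    · intro i; simpa using (mem_box.1 ha.2) i
  · intro a _; exact Fin.cons_self_tail a
  · intro a _; simp
  · intro a _; rw [Fin.cons_self_tail]

lemma sum_box_snoc {p N : ℕ} (F : (Fin (p+1) → ℕ) → M) :
    ∑ g ∈ box N (p+1), F g = ∑ u ∈ Finset.range N, ∑ g ∈ box N p, F (Fin.snoc g u) := by
  rw [← Finset.sum_product']
  apply Finset.sum_nbij' (i := fun g => (g (Fin.last p), Fin.init g)) (j := fun q => Fin.snoc q.2 q.1)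
  · intro a ha
    rw [mem_box] at ha
    refine Finset.mem_product.2 ⟨Finset.mem_range.2 (ha _), ?_⟩
    rw [mem_box]; intro j; exact ha _
  · intro a ha
    rw [Finset.mem_product] at ha
    rw [mem_box]
    intro j
    refine Fin.lastCases ?_ ?_ j
    · simpa using ha.1
    · intro i; simpa using (mem_box.1 ha.2) i
  · intro a _; exact Fin.snoc_init_self a
  · intro a _; simp
  · intro a _; rw [Fin.snoc_init_self]

lemma sum_box_mono {p N N' B : ℕ} (hN : B ≤ N) (hN' : B ≤ N') (F : (Fin p → ℕ) → M)
    (hF : ∀ g : Fin p → ℕ, (∃ j, B ≤ g j) → F g = 0) :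
    ∑ g ∈ box N p, F g = ∑ g ∈ box N' p, F g := by
  have key : ∀ N₀ : ℕ, B ≤ N₀ → ∑ g ∈ box N₀ p, F g = ∑ g ∈ box B p, F g := by
    intro N₀ h
    symm
    apply Finset.sum_subset
    · intro g hg
      rw [mem_box] at *
      intro j; exact lt_of_lt_of_le (hg j) h
    · intro g _ hg
      apply hF
      rw [mem_box] at hg
      push_neg at hg
      obtain ⟨j, hj⟩ := hg
      exact ⟨j, hj⟩
  rw [key N hN, key N' hN']

variable {V : Type*} [AddCommMonoid V] [Module ℚ V]

lemma sum_box_eval_eq {q N : ℕ} (b : Fin (q+1)) (F : (Fin (q+1) → ℕ) → V)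
    (hF : ∀ σ : Equiv.Perm (Fin (q+1)), ∀ g, F (g ∘ σ) = F g) :
    ∑ g ∈ box N (q+1), ((g b : ℕ) : ℚ) • F g = ∑ g ∈ box N (q+1), ((g 0 : ℕ) : ℚ) • F g := by
  rw [sum_box_perm (Equiv.swap b 0) (fun g => ((g b : ℕ) : ℚ) • F g)]
  apply Finset.sum_congr rfl
  intro g _
  rw [hF]
  congr 2
  simp [Equiv.swap_apply_left]

lemma sum_weight {q N : ℕ} (F : (Fin (q+1) → ℕ) → V)
    (hF : ∀ σ : Equiv.Perm (Fin (q+1)), ∀ g, F (g ∘ σ) = F g) :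
    ∑ g ∈ box N (q+1), ((∑ b, g b : ℕ) : ℚ) • F g
      = ((q+1 : ℕ) : ℚ) • ∑ u ∈ Finset.range N, ∑ g' ∈ box N q, (u : ℚ) • F (Fin.cons u g') := by
  have h1 : ∀ g : Fin (q+1) → ℕ, ((∑ b, g b : ℕ) : ℚ) • F g = ∑ b, ((g b : ℕ) : ℚ) • F g := by
    intro g
    rw [← Finset.sum_smul]
    norm_cast
  simp_rw [h1]
  rw [Finset.sum_comm]
  rw [Finset.sum_congr rfl (fun b _ => sum_box_eval_eq b F hF), Finset.sum_const, Finset.card_univ,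
    Fintype.card_fin, sum_box_cons (fun g => ((g 0 : ℕ) : ℚ) • F g)]
  simp only [Fin.cons_zero]
  rw [← Nat.cast_smul_eq_nsmul ℚ]

lemma sum_count_collapse {p N : ℕ} {c : ℕ} (hc : c < N) (H : (Fin (p+1) → ℕ) → V)
    (hH : ∀ σ : Equiv.Perm (Fin (p+1)), ∀ g, H (g ∘ σ) = H g) :
    ∑ g ∈ box N (p+1), ((List.ofFn fun j => v (g j)).count (v c)) • H g
      = (p+1) • ∑ g' ∈ box N p, H (Fin.snoc g' c) := by
  have h1 : ∀ g : Fin (p+1) → ℕ, ((List.ofFn fun j => v (g j)).count (v c)) • H g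
      = ∑ a, (if g a = c then H g else 0) := by
    intro g
    have hv : ∀ a : Fin (p+1), (v (g a) = v c) ↔ (g a = c) := by
      intro a
      constructor
      · intro h; have := congrArg (fun x : ℕ+ => (x : ℕ)) h; simpa [v] using this
      · intro h; rw [h]
    rw [count_ofFn]
    simp_rw [hv]
    rw [Finset.sum_smul]
    apply Finset.sum_congr rfl
    intro a _
    rw [ite_smul, one_smul, zero_smul]
  simp_rw [h1]
  rw [Finset.sum_comm]
  have h2 : ∀ a : Fin (p+1), ∑ g ∈ box N (p+1), (if g a = c then H g else 0)
      = ∑ g ∈ box N (p+1), (if g (Fin.last p) = c then H g else 0) := by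
    intro a
    rw [sum_box_perm (Equiv.swap a (Fin.last p)) (fun g => if g a = c then H g else 0)]
    apply Finset.sum_congr rfl
    intro g _
    rw [hH]
    congr 1
    simp [Equiv.swap_apply_left]
  rw [Finset.sum_congr rfl (fun a _ => h2 a), Finset.sum_const, Finset.card_univ, Fintype.card_fin]
  congr 1
  rw [sum_box_snoc (fun g => if g (Fin.last p) = c then H g else 0)]
  have h3 : ∀ u ∈ Finset.range N, ∑ g' ∈ box N p, (if (Fin.snoc g' u : Fin (p+1) → ℕ) (Fin.last p) = c then H (Fin.snoc g' u) else 0)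
      = if u = c then ∑ g' ∈ box N p, H (Fin.snoc g' u) else 0 := by
    intro u _
    by_cases h : u = c
    · simp [h]
    · simp [Fin.snoc_last, h]
  rw [Finset.sum_congr rfl h3, Finset.sum_ite_eq' (Finset.range N) c]
  rw [if_pos (Finset.mem_range.2 hc)]

section
def lv {p : ℕ} (g : Fin p → ℕ) : List ℕ+ := List.ofFn fun j => v (g j)

lemma mem_lv {p : ℕ} {g : Fin p → ℕ} (j : Fin p) : v (g j) ∈ lv g := by
  rw [lv, List.mem_ofFn]
  exact ⟨j, rfl⟩

lemma lv_perm {p : ℕ} (σ : Equiv.Perm (Fin p)) (g : Fin p → ℕ) :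
    (lv (g ∘ σ)).Perm (lv g) := by
  have h1 : lv (g ∘ σ) = (List.map σ (List.finRange p)).map (fun j => v (g j)) := by
    rw [lv, List.ofFn_eq_map, List.map_map]
    rfl
  rw [h1, lv, List.ofFn_eq_map]
  apply List.Perm.map
  apply List.perm_of_nodup_nodup_toFinset_eq
  · exact (List.nodup_finRange p).map σ.injective
  · exact List.nodup_finRange p
  · ext x
    simp [List.mem_map]
    exact ⟨σ.symm x, by simp⟩

lemma mq_comp {p : ℕ} (σ : Equiv.Perm (Fin p)) (g : Fin p → ℕ) : mq (g ∘ σ) = mq g := by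
  rw [mq, mq]
  have h1 : ∑ j, (g ∘ σ) j = ∑ j, g j := Equiv.sum_comp σ g
  have h2 : ∏ j, (((g ∘ σ) j).factorial : ℚ) = ∏ j, ((g j).factorial : ℚ) :=
    Equiv.prod_comp σ (fun j => ((g j).factorial : ℚ))
  rw [h1, h2]

lemma sum_comp' {p : ℕ} (σ : Equiv.Perm (Fin p)) (g : Fin p → ℕ) :
    ∑ j, (g ∘ σ) j = ∑ j, g j := Equiv.sum_comp σ g

noncomputable def trm {p : ℕ} (iv : Fin p → ℕ) (f : BO) : BO :=
  (Nat.multinomial Finset.univ iv : ℚ) • (Qv (∑ j, iv j) * P (lv iv) f)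

lemma Dn_eq (n : ℕ) (f : BO) : Dn n f = ∑ᶠ iv : Fin n → ℕ, trm iv f := rfl

lemma trm_eq_zero_of_big {p Ni : ℕ} {f : BO} (hvars : ∀ k ∈ f.vars, (k : ℕ) < Ni)
    {iv : Fin p → ℕ} (h : ∃ j, Ni ≤ iv j) : trm iv f = 0 := by
  obtain ⟨j, hj⟩ := h
  have hv : v (iv j) ∉ f.vars := by
    intro hmem
    have h2 := hvars _ hmem
    have h3 : ((v (iv j) : ℕ+) : ℕ) = iv j + 1 := rfl
    rw [h3] at h2
    omega
  rw [trm, P_eq_zero_of_mem (mem_lv j) hv, mul_zero, smul_zero]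

lemma Dn_eq_sum {n N : ℕ} {f : BO} (h : ∀ k ∈ f.vars, (k : ℕ) < N) :
    Dn n f = ∑ iv ∈ box N n, trm iv f := by
  rw [Dn_eq]
  apply finsum_eq_finset_sum_of_support_subset
  intro iv hiv
  simp only [Function.mem_support] at hiv
  simp only [Finset.coe_sort_coe, Finset.mem_coe]
  rw [mem_box]
  intro j
  by_contra hj
  exact hiv (trm_eq_zero_of_big h ⟨j, not_lt.1 hj⟩)

lemma Dn_zero (f : BO) : Dn 0 f = f := by
  rw [Dn_eq]
  rw [finsum_unique]
  rw [trm]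
  simp only [Finset.univ_eq_empty, Nat.multinomial_empty, Nat.cast_one, one_smul,
    Finset.sum_empty]
  simp only [lv, List.ofFn_zero, P_nil, Qv]
  norm_num

lemma vars_Dn_sum {p N Nb : ℕ} {f : BO} (hvars : ∀ k ∈ f.vars, (k : ℕ) < N)
    (hN : N ≤ Nb) (hpN : p * N < Nb) :
    ∀ k ∈ (∑ iv ∈ box N p, trm iv f).vars, (k : ℕ) < Nb := by
  classical
  intro k hk
  have := vars_sum_subset (box N p) (fun iv => trm iv f) hk
  rw [Finset.mem_biUnion] at this
  obtain ⟨iv, hiv, hkiv⟩ := this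
  -- trm iv f = C c * (Qv s * P (lv iv) f)
  have hmul : ((Nat.multinomial Finset.univ iv : ℕ) : ℚ) ≠ 0 := by
    exact_mod_cast (Nat.multinomial_pos _ _).ne'
  simp only [trm, smul_eq_C_mul, vars_C_mul _ hmul] at hkiv
  have h1 : True := trivial
  · have h2 := vars_mul _ _ hkiv
    rw [Finset.mem_union] at h2
    rcases h2 with h2 | h2
    · -- k ∈ vars (Qv s), so k = s with s ≤ p * (N-1)
      rw [Qv] at h2
      split_ifs at h2 with hs
      · replace h2 : k = ⟨∑ j, iv j, hs⟩ := Finset.mem_singleton.1 ((vars_X (R := ℚ) (σ := ℕ+)).subset h2)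
        subst h2
        have hsum : ∑ j, iv j ≤ p * (N - 1) := by
          calc ∑ j, iv j ≤ ∑ _j : Fin p, (N - 1) := by
                apply Finset.sum_le_sum
                intro j _
                have := (mem_box.1 hiv) j
                omega
            _ = p * (N - 1) := by simp [Finset.sum_const, mul_comm]
        show (∑ j, iv j) < Nb
        have h4 : p * (N - 1) ≤ p * N := Nat.mul_le_mul_left p (Nat.sub_le N 1)
        omega
      · simp [vars_one] at h2
    · exact lt_of_lt_of_le (hvars k (vars_P _ _ h2)) hN
end

lemma trm_sum {p : ℕ} {α : Type*} (iv : Fin p → ℕ) (s : Finset α) (g : α → BO) :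
    trm iv (∑ a ∈ s, g a) = ∑ a ∈ s, trm iv (g a) := by
  rw [trm, P_sum, Finset.mul_sum, Finset.smul_sum]
  rfl

/-- main splitting of `trm iv (trm jv f)` -/
lemma trm_trm_raw {a b : ℕ} (iv : Fin a → ℕ) (jv : Fin b → ℕ) (f : BO) :
    trm iv (trm jv f) =
      (mq iv * mq jv) • (Qv (∑ j, iv j) * (Qv (∑ j, jv j) * P (lv iv ++ lv jv) f))
      + (mq iv * mq jv) • (Qv (∑ j, iv j) *
          (if h : 0 < ∑ j, jv j then
            ((lv iv).count ⟨∑ j, jv j, h⟩) • P ((lv iv).erase ⟨∑ j, jv j, h⟩ ++ lv jv) f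
          else 0)) := by
  rw [trm, trm, P_smul, P_Qv_mul, mult_eq_mq, mult_eq_mq]
  rw [mul_smul_comm, smul_smul]
  rw [← P_append]
  rw [mul_add, smul_add]
  congr 2
  by_cases h : 0 < ∑ j, jv j
  · rw [dif_pos h, dif_pos h, ← P_append]
  · rw [dif_neg h, dif_neg h]

noncomputable def crossT {a b : ℕ} (iv : Fin a → ℕ) (jv : Fin b → ℕ) (f : BO) : BO :=
  (mq iv * mq jv) • (Qv (∑ j, iv j) *
    (if h : 0 < ∑ j, jv j then
      ((lv iv).count ⟨∑ j, jv j, h⟩) • P ((lv iv).erase ⟨∑ j, jv j, h⟩ ++ lv jv) f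
    else 0))

noncomputable def canT {a b : ℕ} (u : ℕ) (iv : Fin a → ℕ) (jv : Fin b → ℕ) (f : BO) : BO :=
  ((u : ℚ) * ((((∑ j, iv j) + (u + ∑ j, jv j) - 1).factorial : ℚ)) /
    ((u.factorial : ℚ) * (∏ j, ((iv j).factorial : ℚ)) * (∏ j, ((jv j).factorial : ℚ)))) •
  (Qv ((∑ j, iv j) + (u + ∑ j, jv j) - 1) * P (lv iv ++ (v u :: lv jv)) f)

noncomputable def Gt (p No : ℕ) {b : ℕ} (jv : Fin b → ℕ) (f : BO) : BO :=
  ((p+1 : ℕ) : ℚ) • ∑ iv' ∈ box No p,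
    (((((∑ j, iv' j) + (∑ b, jv b) - 1).factorial : ℚ)) /
      ((∏ j, ((iv' j).factorial : ℚ)) * (∏ b, ((jv b).factorial : ℚ)))) •
    (Qv ((∑ j, iv' j) + (∑ b, jv b) - 1) * P (lv iv' ++ lv jv) f)

lemma lv_snoc {p : ℕ} (iv' : Fin p → ℕ) (c : ℕ) :
    lv (Fin.snoc iv' c : Fin (p+1) → ℕ) = lv iv' ++ [v c] := by
  rw [lv, lv, List.ofFn_succ']
  rw [List.concat_eq_append]
  simp

lemma lv_cons {p : ℕ} (u : ℕ) (jv' : Fin p → ℕ) :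
    lv (Fin.cons u jv' : Fin (p+1) → ℕ) = v u :: lv jv' := by
  rw [lv, lv, List.ofFn_succ]
  simp

lemma sum_snoc {p : ℕ} (iv' : Fin p → ℕ) (c : ℕ) :
    ∑ j, (Fin.snoc iv' c : Fin (p+1) → ℕ) j = (∑ j, iv' j) + c := by
  rw [Fin.sum_univ_castSucc]
  simp

lemma prod_snoc {p : ℕ} (iv' : Fin p → ℕ) (c : ℕ) :
    ∏ j, (((Fin.snoc iv' c : Fin (p+1) → ℕ) j).factorial : ℚ)
      = (∏ j, ((iv' j).factorial : ℚ)) * (c.factorial : ℚ) := by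
  rw [Fin.prod_univ_castSucc]
  simp

lemma sum_cons {p : ℕ} (u : ℕ) (jv' : Fin p → ℕ) :
    ∑ j, (Fin.cons u jv' : Fin (p+1) → ℕ) j = u + ∑ j, jv' j := by
  rw [Fin.sum_univ_succ]
  simp

lemma prod_cons {p : ℕ} (u : ℕ) (jv' : Fin p → ℕ) :
    ∏ j, (((Fin.cons u jv' : Fin (p+1) → ℕ) j).factorial : ℚ)
      = (u.factorial : ℚ) * ∏ j, ((jv' j).factorial : ℚ) := by
  rw [Fin.prod_univ_succ]
  simp

lemma coeff_arith {p q : ℕ} (iv' : Fin p → ℕ) (jv : Fin (q+1) → ℕ) (h : 0 < ∑ b, jv b) :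
    mq (Fin.snoc iv' ((∑ b, jv b) - 1) : Fin (p+1) → ℕ) * mq jv
      = ((∑ b, jv b : ℕ) : ℚ) * (((((∑ j, iv' j) + (∑ b, jv b) - 1).factorial : ℚ)) /
          ((∏ j, ((iv' j).factorial : ℚ)) * (∏ b, ((jv b).factorial : ℚ)))) := by
  set t := ∑ b, jv b with ht
  rw [mq, mq, sum_snoc, prod_snoc]
  have h1 : (∑ j, iv' j) + (t - 1) = (∑ j, iv' j) + t - 1 := by omega
  rw [h1]
  have h2 : (t.factorial : ℚ) = (t : ℚ) * ((t-1).factorial : ℚ) := by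
    rw [show t = (t - 1) + 1 by omega, Nat.factorial_succ]
    push_cast
    ring
  rw [h2]
  have h3 : ((t-1).factorial : ℚ) ≠ 0 := Nat.cast_ne_zero.2 (Nat.factorial_ne_zero _)
  have h4 := prodfac_ne_zero iv'
  have h5 := prodfac_ne_zero jv
  field_simp

lemma Gt_inv (p No : ℕ) {b : ℕ} (f : BO) (σ : Equiv.Perm (Fin b)) (jv : Fin b → ℕ) :
    Gt p No (jv ∘ σ) f = Gt p No jv f := by
  rw [Gt, Gt]
  congr 1
  apply Finset.sum_congr rfl
  intro iv' _
  have h1 : ∑ j, (jv ∘ σ) j = ∑ j, jv j := Equiv.sum_comp σ jv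
  have h2 : ∏ j, (((jv ∘ σ) j).factorial : ℚ) = ∏ j, ((jv j).factorial : ℚ) :=
    Equiv.prod_comp σ fun j => ((jv j).factorial : ℚ)
  rw [h1, h2, P_perm ((lv_perm σ jv).append_left (lv iv'))]

lemma step1 {p q No Ni : ℕ} {f : BO} (hNo : (q+1) * Ni ≤ No) (hNi : 0 < Ni)
    (jv : Fin (q+1) → ℕ) (hjv : jv ∈ box Ni (q+1)) :
    ∑ iv ∈ box No (p+1), crossT iv jv f = ((∑ b, jv b : ℕ) : ℚ) • Gt p No jv f := by
  by_cases h : 0 < ∑ b, jv b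
  · set t := ∑ b, jv b with ht
    set c := t - 1 with hc
    have hvc : (⟨t, h⟩ : ℕ+) = v c := by
      apply PNat.coe_injective
      show t = c + 1
      omega
    have hcNo : c < No := by
      have h1 : ∀ b, jv b < Ni := mem_box.1 hjv
      have h2 : t ≤ (q+1) * (Ni - 1) := by
        calc t ≤ ∑ _b : Fin (q+1), (Ni - 1) := Finset.sum_le_sum (fun b _ => by have := h1 b; omega)
          _ = (q+1) * (Ni - 1) := by rw [Finset.sum_const, Finset.card_univ, Fintype.card_fin, smul_eq_mul]
      have h3 : (q+1) * (Ni - 1) ≤ (q+1) * Ni := Nat.mul_le_mul_left _ (Nat.sub_le _ _)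
      omega
    -- rewrite crossT as count • H
    have hct : ∀ iv : Fin (p+1) → ℕ, crossT iv jv f
        = ((List.ofFn fun j => v (iv j)).count (v c)) •
            ((mq iv * mq jv) • (Qv (∑ j, iv j) * P ((lv iv).erase (v c) ++ lv jv) f)) := by
      intro iv
      rw [crossT, dif_pos h, hvc]
      rw [mul_smul_comm, smul_comm]
      rfl
    simp_rw [hct]
    rw [sum_count_collapse hcNo _ ?_]
    · -- evaluate at snoc
      have hsnoc : ∀ iv' : Fin p → ℕ,
          (mq (Fin.snoc iv' c : Fin (p+1) → ℕ) * mq jv) •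
            (Qv (∑ j, (Fin.snoc iv' c : Fin (p+1) → ℕ) j) *
              P ((lv (Fin.snoc iv' c : Fin (p+1) → ℕ)).erase (v c) ++ lv jv) f)
          = (t : ℚ) • ((((((∑ j, iv' j) + t - 1).factorial : ℚ)) /
              ((∏ j, ((iv' j).factorial : ℚ)) * (∏ b, ((jv b).factorial : ℚ)))) •
            (Qv ((∑ j, iv' j) + t - 1) * P (lv iv' ++ lv jv) f)) := by
        intro iv'
        rw [coeff_arith iv' jv h, sum_snoc]
        have hper : ((lv (Fin.snoc iv' c : Fin (p+1) → ℕ)).erase (v c)).Perm (lv iv') := by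
          rw [lv_snoc]
          have h5 : (lv iv' ++ [v c]).Perm (v c :: lv iv') := List.perm_append_singleton _ _
          have h6 := h5.erase (v c)
          rw [List.erase_cons_head] at h6
          exact h6
        rw [P_perm (hper.append_right (lv jv))]
        rw [show (∑ j, iv' j) + c = (∑ j, iv' j) + t - 1 by omega]
        rw [mul_smul]
      simp_rw [hsnoc]
      rw [Gt, ← ht, ← Finset.smul_sum, ← Nat.cast_smul_eq_nsmul ℚ (p+1), smul_comm]
    · -- invariance
      intro σ g
      have h1 : mq (g ∘ σ) = mq g := by
        rw [mq, mq]
        have ha : ∑ j, (g ∘ σ) j = ∑ j, g j := Equiv.sum_comp σ g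
        have hb : ∏ j, (((g ∘ σ) j).factorial : ℚ) = ∏ j, ((g j).factorial : ℚ) :=
          Equiv.prod_comp σ fun j => ((g j).factorial : ℚ)
        rw [ha, hb]
      rw [h1, P_perm (((lv_perm σ g).erase (v c)).append_right (lv jv))]
      congr 3
      exact Equiv.sum_comp σ g
  · -- t = 0
    have h0 : (∑ b, jv b) = 0 := by omega
    rw [h0]
    rw [Nat.cast_zero, zero_smul]
    apply Finset.sum_eq_zero
    intro iv _
    rw [crossT, dif_neg h, mul_zero, smul_zero]

lemma Gt_cons {p q No : ℕ} (f : BO) (u : ℕ) (jv' : Fin q → ℕ) :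
    (u : ℚ) • Gt p No (Fin.cons u jv' : Fin (q+1) → ℕ) f
      = ((p+1 : ℕ) : ℚ) • ∑ iv' ∈ box No p, canT u iv' jv' f := by
  rw [Gt, smul_comm]
  congr 1
  rw [Finset.smul_sum]
  apply Finset.sum_congr rfl
  intro iv' _
  rw [canT, sum_cons, prod_cons, lv_cons, smul_smul]
  congr 1
  ring

lemma cross_collapse {p q No Ni : ℕ} (f : BO) (hNo : (q+1) * Ni ≤ No) (hNi : 0 < Ni) :
    ∑ iv ∈ box No (p+1), ∑ jv ∈ box Ni (q+1), crossT iv jv f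
      = (((p+1 : ℕ) : ℚ) * ((q+1 : ℕ) : ℚ)) •
          ∑ u ∈ Finset.range Ni, ∑ jv' ∈ box Ni q, ∑ iv' ∈ box No p, canT u iv' jv' f := by
  rw [Finset.sum_comm]
  rw [Finset.sum_congr rfl (fun jv hjv => step1 hNo hNi jv hjv)]
  rw [sum_weight (fun jv => Gt p No jv f) (fun σ g => Gt_inv p No f σ g)]
  have h1 : ∀ u ∈ Finset.range Ni, ∑ jv' ∈ box Ni q, (u : ℚ) • Gt p No (Fin.cons u jv') f
      = ((p+1 : ℕ) : ℚ) • ∑ jv' ∈ box Ni q, ∑ iv' ∈ box No p, canT u iv' jv' f := by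
    intro u _
    rw [Finset.smul_sum]
    exact Finset.sum_congr rfl fun jv' _ => Gt_cons f u jv'
  rw [Finset.sum_congr rfl h1, ← Finset.smul_sum, smul_smul, mul_comm]

noncomputable def mainT {a b : ℕ} (iv : Fin a → ℕ) (jv : Fin b → ℕ) (f : BO) : BO :=
  (mq iv * mq jv) • (Qv (∑ j, iv j) * (Qv (∑ j, jv j) * P (lv iv ++ lv jv) f))

lemma P_zero_of_big {Ni : ℕ} {f : BO} (hvars : ∀ k ∈ f.vars, (k : ℕ) < Ni)
    {l : List ℕ+} {k : ℕ+} (hk : k ∈ l) (hbig : Ni ≤ (k : ℕ)) : P l f = 0 :=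
  P_eq_zero_of_mem hk (fun hv => absurd (hvars k hv) (not_lt.2 hbig))

lemma mainT_symm {a b : ℕ} (iv : Fin a → ℕ) (jv : Fin b → ℕ) (f : BO) :
    mainT iv jv f = mainT jv iv f := by
  rw [mainT, mainT, P_perm (List.perm_append_comm (l₁ := lv iv)), mul_comm (mq iv),
    mul_left_comm]

lemma mainT_zero_left {a b Ni : ℕ} {f : BO} (hvars : ∀ k ∈ f.vars, (k : ℕ) < Ni)
    {iv : Fin a → ℕ} (jv : Fin b → ℕ) (h : ∃ j, Ni ≤ iv j) : mainT iv jv f = 0 := by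
  obtain ⟨j, hj⟩ := h
  rw [mainT, P_zero_of_big hvars (List.mem_append_left _ (mem_lv j)) (by exact hj.trans (by simp [v]))]
  simp

lemma mainT_zero_right {a b Ni : ℕ} {f : BO} (hvars : ∀ k ∈ f.vars, (k : ℕ) < Ni)
    (iv : Fin a → ℕ) {jv : Fin b → ℕ} (h : ∃ j, Ni ≤ jv j) : mainT iv jv f = 0 := by
  obtain ⟨j, hj⟩ := h
  rw [mainT, P_zero_of_big hvars (List.mem_append_right _ (mem_lv j)) (by exact hj.trans (by simp [v]))]
  simp

lemma canT_symm {a b : ℕ} (u : ℕ) (iv : Fin a → ℕ) (jv : Fin b → ℕ) (f : BO) :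
    canT u iv jv f = canT u jv iv f := by
  rw [canT, canT]
  have h1 : (∑ j, iv j) + (u + ∑ j, jv j) - 1 = (∑ j, jv j) + (u + ∑ j, iv j) - 1 := by omega
  have h2 : (lv iv ++ (v u :: lv jv)).Perm (lv jv ++ (v u :: lv iv)) := by
    refine List.perm_middle.trans (.trans ?_ List.perm_middle.symm)
    exact (List.perm_append_comm).cons (v u)
  rw [h1, P_perm h2]
  congr 1
  ring

lemma canT_zero_left {a b Ni : ℕ} {f : BO} (hvars : ∀ k ∈ f.vars, (k : ℕ) < Ni)
    (u : ℕ) {iv : Fin a → ℕ} (jv : Fin b → ℕ) (h : ∃ j, Ni ≤ iv j) : canT u iv jv f = 0 := by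
  obtain ⟨j, hj⟩ := h
  rw [canT, P_zero_of_big hvars (List.mem_append_left _ (mem_lv j)) (by exact hj.trans (by simp [v]))]
  simp

lemma canT_zero_right {a b Ni : ℕ} {f : BO} (hvars : ∀ k ∈ f.vars, (k : ℕ) < Ni)
    (u : ℕ) (iv : Fin a → ℕ) {jv : Fin b → ℕ} (h : ∃ j, Ni ≤ jv j) : canT u iv jv f = 0 := by
  obtain ⟨j, hj⟩ := h
  have hm : v (jv j) ∈ lv iv ++ (v u :: lv jv) :=
    List.mem_append_right _ (List.mem_cons_of_mem _ (mem_lv j))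
  rw [canT, P_zero_of_big hvars hm (by exact hj.trans (by simp [v]))]
  simp

lemma can_sym {a b N₁ N₂ : ℕ} {f : BO} (hvars : ∀ k ∈ f.vars, (k : ℕ) < N₁) (h12 : N₁ ≤ N₂) :
    ∑ u ∈ Finset.range N₁, ∑ jv ∈ box N₁ b, ∑ iv ∈ box N₂ a, canT u iv jv f
      = ∑ u ∈ Finset.range N₁, ∑ iv ∈ box N₁ a, ∑ jv ∈ box N₂ b, canT u jv iv f := by
  apply Finset.sum_congr rfl
  intro u _
  have e1 : ∑ jv ∈ box N₁ b, ∑ iv ∈ box N₂ a, canT u iv jv f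
      = ∑ jv ∈ box N₂ b, ∑ iv ∈ box N₂ a, canT u iv jv f := by
    apply sum_box_mono le_rfl h12
    intro g hg
    apply Finset.sum_eq_zero
    intro iv _
    exact canT_zero_right hvars u iv hg
  have e2 : ∑ iv ∈ box N₁ a, ∑ jv ∈ box N₂ b, canT u jv iv f
      = ∑ iv ∈ box N₂ a, ∑ jv ∈ box N₂ b, canT u jv iv f := by
    apply sum_box_mono le_rfl h12
    intro g hg
    apply Finset.sum_eq_zero
    intro jv _
    exact canT_zero_right hvars u jv hg
  rw [e1, e2, Finset.sum_comm]
  apply Finset.sum_congr rfl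
  intro iv _
  apply Finset.sum_congr rfl
  intro jv _
  exact canT_symm u iv jv f

lemma main_sym {a b N₁ N₂ : ℕ} {f : BO} (hvars : ∀ k ∈ f.vars, (k : ℕ) < N₁) (h12 : N₁ ≤ N₂) :
    ∑ iv ∈ box N₂ a, ∑ jv ∈ box N₁ b, mainT iv jv f
      = ∑ jv ∈ box N₂ b, ∑ iv ∈ box N₁ a, mainT jv iv f := by
  have e1 : ∑ iv ∈ box N₂ a, ∑ jv ∈ box N₁ b, mainT iv jv f
      = ∑ iv ∈ box N₁ a, ∑ jv ∈ box N₁ b, mainT iv jv f := by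
    apply sum_box_mono h12 le_rfl
    intro g hg
    exact Finset.sum_eq_zero fun jv _ => mainT_zero_left hvars jv hg
  have e2 : ∑ jv ∈ box N₂ b, ∑ iv ∈ box N₁ a, mainT jv iv f
      = ∑ jv ∈ box N₁ b, ∑ iv ∈ box N₁ a, mainT jv iv f := by
    apply sum_box_mono h12 le_rfl
    intro g hg
    exact Finset.sum_eq_zero fun iv _ => mainT_zero_left hvars iv hg
  rw [e1, e2, Finset.sum_comm]
  exact Finset.sum_congr rfl fun iv _ => Finset.sum_congr rfl fun jv _ => (mainT_symm jv iv f)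


lemma trm_trm {a b : ℕ} (iv : Fin a → ℕ) (jv : Fin b → ℕ) (f : BO) :
    trm iv (trm jv f) = mainT iv jv f + crossT iv jv f := by
  rw [mainT, crossT]
  exact trm_trm_raw iv jv f


theorem stmt_15 (n m : ℕ) (f : BO) : Dn n (Dn m f) = Dn m (Dn n f) := by
  rcases n with _ | p
  · rw [Dn_zero, Dn_zero]
  rcases m with _ | q
  · rw [Dn_zero, Dn_zero]
  set N₁ := (f.vars.sup fun k => (k : ℕ)) + 1 with hN₁def
  have hvars : ∀ k ∈ f.vars, (k : ℕ) < N₁ := fun k hk =>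
    Nat.lt_succ_of_le (Finset.le_sup (f := fun k : ℕ+ => (k : ℕ)) hk)
  have hN₁pos : 0 < N₁ := Nat.succ_pos _
  set N₂ := ((p+1) + (q+1) + 1) * N₁ with hN₂def
  have h12 : N₁ ≤ N₂ := by
    calc N₁ = 1 * N₁ := (one_mul N₁).symm
      _ ≤ ((p+1) + (q+1) + 1) * N₁ := Nat.mul_le_mul_right N₁ (by omega)
  have hmN : (q+1) * N₁ ≤ N₂ := Nat.mul_le_mul_right N₁ (by omega)
  have hnN : (p+1) * N₁ ≤ N₂ := Nat.mul_le_mul_right N₁ (by omega)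
  have hmlt : (q+1) * N₁ < N₂ := (Nat.mul_lt_mul_right hN₁pos).2 (by omega)
  have hnlt : (p+1) * N₁ < N₂ := (Nat.mul_lt_mul_right hN₁pos).2 (by omega)
  have hL : Dn (p+1) (Dn (q+1) f)
      = ∑ iv ∈ box N₂ (p+1), ∑ jv ∈ box N₁ (q+1), (mainT iv jv f + crossT iv jv f) := by
    rw [Dn_eq_sum hvars (n := q+1), Dn_eq_sum (vars_Dn_sum hvars h12 hmlt)]
    exact Finset.sum_congr rfl fun iv _ => by
      rw [trm_sum]
      exact Finset.sum_congr rfl fun jv _ => trm_trm iv jv f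
  have hR : Dn (q+1) (Dn (p+1) f)
      = ∑ jv ∈ box N₂ (q+1), ∑ iv ∈ box N₁ (p+1), (mainT jv iv f + crossT jv iv f) := by
    rw [Dn_eq_sum hvars (n := p+1), Dn_eq_sum (vars_Dn_sum hvars h12 hnlt)]
    exact Finset.sum_congr rfl fun jv _ => by
      rw [trm_sum]
      exact Finset.sum_congr rfl fun iv _ => trm_trm jv iv f
  rw [hL, hR]
  have splitL : ∑ iv ∈ box N₂ (p+1), ∑ jv ∈ box N₁ (q+1), (mainT iv jv f + crossT iv jv f)
      = (∑ iv ∈ box N₂ (p+1), ∑ jv ∈ box N₁ (q+1), mainT iv jv f)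
        + ∑ iv ∈ box N₂ (p+1), ∑ jv ∈ box N₁ (q+1), crossT iv jv f := by
    rw [← Finset.sum_add_distrib]
    exact Finset.sum_congr rfl fun iv _ => Finset.sum_add_distrib
  have splitR : ∑ jv ∈ box N₂ (q+1), ∑ iv ∈ box N₁ (p+1), (mainT jv iv f + crossT jv iv f)
      = (∑ jv ∈ box N₂ (q+1), ∑ iv ∈ box N₁ (p+1), mainT jv iv f)
        + ∑ jv ∈ box N₂ (q+1), ∑ iv ∈ box N₁ (p+1), crossT jv iv f := by
    rw [← Finset.sum_add_distrib]
    exact Finset.sum_congr rfl fun jv _ => Finset.sum_add_distrib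
  rw [splitL, splitR, main_sym hvars h12]
  congr 1
  rw [cross_collapse f hmN hN₁pos, cross_collapse f hnN hN₁pos,
    can_sym hvars h12, mul_comm]
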